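/- arXiv:2005.08899 — 2 statements merged into one kernel-verified Lean document; each statement's English description precedes it below -/
import Mathlib

section
/- There exists a universal constant C1 > 0 with the following property. Let t be a random variable distributed as log((1/n)·χ²_M) where M = n−j+1 for some 1 ≤ j ≤ n, and let t̄ := t − E[t]. Then for every p ≥ 1: (E[|t̄|^p])^{1/p} ≤ C1·max{ sqrt(p/M), p/M }. -/
open MeasureTheory ProbabilityTheory Real
open Set Filter
open scoped NNReal ENNReal

/-- The chi-squared distribution with `m` degrees of freedom. -/
noncomputable def chiSqMeasure (m : ℕ) : Measure ℝ :=
  ProbabilityTheory.gammaMeasure (m / 2 : ℝ) (1 / 2)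


-- pointwise lemma L1
lemma L1 {u p lam : ℝ} (hp : 1 ≤ p) (hl : 0 < lam) :
    |u| ^ p ≤ (p / lam) ^ p * (Real.exp (lam * u) + Real.exp (-(lam * u))) := by
  have hp0 : 0 < p := lt_of_lt_of_le one_pos hp
  have key : ∀ v : ℝ, 0 ≤ v → v ^ p ≤ p ^ p * Real.exp v := by
    intro v hv
    rcases eq_or_lt_of_le hv with rfl | hv
    · rw [Real.zero_rpow hp0.ne']; positivity
    · have hlog : Real.log v ≤ Real.log p + v / p := by
        have := Real.log_le_sub_one_of_pos (show 0 < v / p by positivity)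
        have h2 : Real.log (v / p) = Real.log v - Real.log p :=
          Real.log_div hv.ne' hp0.ne'
        nlinarith [div_nonneg hv.le hp0.le]
      calc v ^ p = Real.exp (Real.log v * p) := by
            rw [Real.rpow_def_of_pos hv]
        _ ≤ Real.exp ((Real.log p + v / p) * p) := by
            apply Real.exp_le_exp.2; exact mul_le_mul_of_nonneg_right hlog hp0.le
        _ = p ^ p * Real.exp v := by
            rw [add_mul, Real.exp_add, div_mul_cancel₀ _ hp0.ne',
              ← Real.rpow_def_of_pos hp0]
  have h1 : |u| ^ p = (lam * |u|) ^ p / lam ^ p := by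
    rw [Real.mul_rpow hl.le (abs_nonneg u)]
    field_simp
  have h2 := key (lam * |u|) (by positivity)
  have h3 : Real.exp (lam * |u|) ≤ Real.exp (lam * u) + Real.exp (-(lam * u)) := by
    rcases abs_cases u with ⟨h, _⟩ | ⟨h, _⟩
    · rw [h]; nlinarith [Real.exp_pos (-(lam*u))]
    · rw [h, mul_neg]; nlinarith [Real.exp_pos (lam*u)]
  have hpl : (p / lam) ^ p = p ^ p / lam ^ p := Real.div_rpow hp0.le hl.le p
  rw [h1, hpl]
  rw [div_mul_eq_mul_div, div_le_div_iff_of_pos_right (by positivity)]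
  calc (lam * |u|) ^ p ≤ p ^ p * Real.exp (lam * |u|) := h2
    _ ≤ p ^ p * (Real.exp (lam * u) + Real.exp (-(lam * u))) := by
        apply mul_le_mul_of_nonneg_left h3 (by positivity)

lemma L3 {x t : ℝ} (hx : 0 < x) (ht0 : 0 ≤ t) (ht1 : t ≤ 1) :
    Real.Gamma (x + t) ≤ Real.Gamma x ^ (1 - t) * Real.Gamma (x + 1) ^ t := by
  have h := Real.convexOn_log_Gamma.2 (Set.mem_Ioi.2 hx)
    (Set.mem_Ioi.2 (by linarith : (0:ℝ) < x + 1)) (by linarith : 0 ≤ 1 - t) ht0 (by ring)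
  simp only [Function.comp, smul_eq_mul] at h
  have hxt : 0 < x + t := by linarith
  have e1 : (1 - t) * x + t * (x + 1) = x + t := by ring
  rw [e1] at h
  have h2 : Real.Gamma x ^ (1 - t) * Real.Gamma (x + 1) ^ t =
      Real.exp ((1 - t) * Real.log (Real.Gamma x) + t * Real.log (Real.Gamma (x + 1))) := by
    rw [Real.exp_add, Real.rpow_def_of_pos (Real.Gamma_pos_of_pos hx),
      Real.rpow_def_of_pos (Real.Gamma_pos_of_pos (by linarith : (0:ℝ) < x + 1)),
      mul_comm (Real.log (Real.Gamma x)), mul_comm (Real.log (Real.Gamma (x+1)))]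
  rw [h2]
  calc Real.Gamma (x + t) = Real.exp (Real.log (Real.Gamma (x + t))) :=
        (Real.exp_log (Real.Gamma_pos_of_pos hxt)).symm
    _ ≤ _ := Real.exp_le_exp.2 h

lemma L3' {x t : ℝ} (hx : 0 < x) (ht0 : 0 ≤ t) (ht1 : t ≤ 1) :
    Real.Gamma (x + t) ≤ Real.Gamma x * x ^ t := by
  have h := L3 hx ht0 ht1
  rw [Real.Gamma_add_one hx.ne'] at h
  have hG := Real.Gamma_pos_of_pos hx
  calc Real.Gamma (x + t) ≤ Real.Gamma x ^ (1 - t) * (x * Real.Gamma x) ^ t := h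
    _ = (Real.Gamma x ^ (1 - t) * Real.Gamma x ^ t) * x ^ t := by
        rw [Real.mul_rpow hx.le hG.le]; ring
    _ = Real.Gamma x * x ^ t := by
        rw [← Real.rpow_add hG]; norm_num

lemma L4aux (n : ℕ) : ∀ x lam : ℝ, 0 < x → 0 ≤ lam → lam ≤ n →
    Real.Gamma (x + lam) ≤ Real.Gamma x * (x + lam) ^ lam := by
  induction n with
  | zero => intro x lam hx h0 h1
            have : lam = 0 := le_antisymm (by exact_mod_cast h1) h0
            simp [this]
  | succ n ih =>
    intro x lam hx h0 h1
    by_cases hc : lam ≤ 1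
    · calc Real.Gamma (x + lam) ≤ Real.Gamma x * x ^ lam := L3' hx h0 hc
        _ ≤ Real.Gamma x * (x + lam) ^ lam := by
            apply mul_le_mul_of_nonneg_left _ (Real.Gamma_pos_of_pos hx).le
            exact Real.rpow_le_rpow hx.le (by linarith) h0
    · push_neg at hc
      have h0' : (0:ℝ) ≤ lam - 1 := by linarith
      have h1' : lam - 1 ≤ (n:ℝ) := by push_cast at h1 ⊢; linarith
      have hxl : 0 < x + lam - 1 := by linarith
      have key := ih x (lam - 1) hx h0' h1'
      have e1 : x + lam = (x + (lam - 1)) + 1 := by ring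
      have hpos : (0:ℝ) < x + lam := by linarith
      calc Real.Gamma (x + lam) = (x + (lam - 1)) * Real.Gamma (x + (lam - 1)) := by
            rw [e1, Real.Gamma_add_one (by linarith : x + (lam - 1) ≠ 0)]
        _ ≤ (x + lam) * (Real.Gamma x * (x + (lam - 1)) ^ (lam - 1)) := by
            apply mul_le_mul (by linarith) key (by positivity)
            positivity
        _ ≤ (x + lam) * (Real.Gamma x * (x + lam) ^ (lam - 1)) := by
            apply mul_le_mul_of_nonneg_left _ hpos.le
            apply mul_le_mul_of_nonneg_left _ (Real.Gamma_pos_of_pos hx).le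
            exact Real.rpow_le_rpow (by linarith) (by linarith) h0'
        _ = Real.Gamma x * (x + lam) ^ lam := by
            have h5 : (x + lam) ^ (lam - 1) * (x + lam) = (x + lam) ^ lam := by
              rw [← Real.rpow_add_one hpos.ne']; norm_num
            rw [← h5]; ring

lemma L4 {x lam : ℝ} (hx : 0 < x) (h0 : 0 ≤ lam) :
    Real.Gamma (x + lam) ≤ Real.Gamma x * (x + lam) ^ lam :=
  L4aux ⌈lam⌉₊ x lam hx h0 (Nat.le_ceil lam)

lemma L5unit {x lam : ℝ} (hx : 0 < x) (h0 : 0 ≤ lam) (h1 : lam ≤ 1) :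
    Real.Gamma x * x ^ lam * (x / (x + 1)) ≤ Real.Gamma (x + lam) := by
  have hxl : 0 < x + lam := by linarith
  have hstep := L3 (x := x + lam) (t := 1 - lam) hxl (by linarith) (by linarith)
  rw [show x + lam + (1 - lam) = x + 1 by ring, Real.Gamma_add_one hx.ne',
    Real.Gamma_add_one hxl.ne'] at hstep
  -- hstep : x * Γ x ≤ Γ(x+lam) ^ (1-(1-lam)) * ((x+lam) * Γ(x+lam)) ^ (1-lam)
  have hG := Real.Gamma_pos_of_pos hxl
  have hstep2 : x * Real.Gamma x ≤ Real.Gamma (x + lam) * (x + lam) ^ (1 - lam) := by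
    calc x * Real.Gamma x ≤ Real.Gamma (x+lam) ^ (1 - (1-lam)) *
          ((x + lam) * Real.Gamma (x+lam)) ^ (1-lam) := hstep
      _ = (Real.Gamma (x+lam) ^ (1 - (1-lam)) * Real.Gamma (x+lam) ^ (1-lam)) *
          (x + lam) ^ (1-lam) := by rw [Real.mul_rpow hxl.le hG.le]; ring
      _ = Real.Gamma (x + lam) * (x + lam) ^ (1 - lam) := by
          rw [← Real.rpow_add hG]; norm_num
  -- now divide
  have hpow : (x + lam) ^ (1 - lam) ≤ (x + 1) ^ (1 - lam) :=
    Real.rpow_le_rpow hxl.le (by linarith) (by linarith)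
  have hx1 : (0:ℝ) < x + 1 := by linarith
  have hlow : x ^ lam * (x / (x+1)) * (x + 1) ^ (1 - lam) ≤ x := by
    have h1' : (x+1) ^ (1 - lam) = (x+1) * ((x+1) ^ lam)⁻¹ := by
      rw [show (1:ℝ) - lam = 1 + (-lam) by ring, Real.rpow_add hx1, Real.rpow_one,
        Real.rpow_neg hx1.le]
    rw [h1']
    have hxp : x ^ lam ≤ (x+1) ^ lam := Real.rpow_le_rpow hx.le (by linarith) h0
    have hinv : (0:ℝ) < ((x+1) ^ lam) := by positivity
    calc x ^ lam * (x / (x+1)) * ((x+1) * ((x+1) ^ lam)⁻¹)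
        = x * (x ^ lam * ((x+1) ^ lam)⁻¹) := by field_simp
      _ ≤ x * 1 := by
          apply mul_le_mul_of_nonneg_left _ hx.le
          rw [← div_eq_mul_inv, div_le_one hinv]; exact hxp
      _ = x := mul_one x
  -- combine: Γx * x^lam * (x/(x+1)) * (x+1)^(1-lam) ≤ Γx * x ≤ Γ(x+lam)(x+lam)^(1-lam) ≤ Γ(x+lam)(x+1)^(1-lam)
  have hGx := Real.Gamma_pos_of_pos hx
  have hfin : Real.Gamma x * x ^ lam * (x / (x+1)) * (x + 1) ^ (1 - lam) ≤
      Real.Gamma (x + lam) * (x + 1) ^ (1 - lam) := by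
    calc Real.Gamma x * x ^ lam * (x / (x+1)) * (x + 1) ^ (1 - lam)
        = Real.Gamma x * (x ^ lam * (x / (x+1)) * (x + 1) ^ (1 - lam)) := by ring
      _ ≤ Real.Gamma x * x := mul_le_mul_of_nonneg_left hlow hGx.le
      _ = x * Real.Gamma x := by ring
      _ ≤ Real.Gamma (x + lam) * (x + lam) ^ (1 - lam) := hstep2
      _ ≤ Real.Gamma (x + lam) * (x + 1) ^ (1 - lam) :=
          mul_le_mul_of_nonneg_left hpow hG.le
  exact le_of_mul_le_mul_right hfin (by positivity)

lemma L5aux (n : ℕ) : ∀ x lam : ℝ, 0 < x → 0 ≤ lam → lam ≤ n →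
    Real.Gamma x * x ^ lam * (x / (x + 1)) ≤ Real.Gamma (x + lam) := by
  induction n with
  | zero => intro x lam hx h0 h1
            have : lam = 0 := le_antisymm (by exact_mod_cast h1) h0
            subst this
            simp only [Real.rpow_zero, mul_one, add_zero]
            have : x / (x+1) ≤ 1 := by
              rw [div_le_one (by linarith)]; linarith
            nlinarith [Real.Gamma_pos_of_pos hx]
  | succ n ih =>
    intro x lam hx h0 h1
    by_cases hc : lam ≤ 1
    · exact L5unit hx h0 hc
    · push_neg at hc
      have h1' : lam - 1 ≤ (n:ℝ) := by push_cast at h1 ⊢; linarith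
      have key := ih x (lam - 1) hx (by linarith) h1'
      have hxl : (0:ℝ) < x + (lam - 1) := by linarith
      calc Real.Gamma x * x ^ lam * (x / (x + 1))
          = x * (Real.Gamma x * x ^ (lam - 1) * (x / (x+1))) := by
            have h5 : x ^ (lam - 1) * x = x ^ lam := by
              rw [← Real.rpow_add_one hx.ne']; norm_num
            rw [← h5]; ring
        _ ≤ x * Real.Gamma (x + (lam - 1)) := by
            apply mul_le_mul_of_nonneg_left key hx.le
        _ ≤ (x + (lam - 1)) * Real.Gamma (x + (lam - 1)) := by
            apply mul_le_mul_of_nonneg_right (by linarith) (Real.Gamma_pos_of_pos hxl).le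
        _ = Real.Gamma (x + lam) := by
            rw [show x + lam = (x + (lam - 1)) + 1 by ring,
              Real.Gamma_add_one hxl.ne']

lemma L5 {x lam : ℝ} (hx : 0 < x) (h0 : 0 ≤ lam) :
    Real.Gamma x * x ^ lam * (x / (x + 1)) ≤ Real.Gamma (x + lam) :=
  L5aux ⌈lam⌉₊ x lam hx h0 (Nat.le_ceil lam)

lemma L2 {a s : ℝ} (ha : 0 < a) (has : 0 < a + s) (hs : s ≠ 0) :
    Integrable (fun x : ℝ => x ^ s) (gammaMeasure a (1/2)) ∧
    ∫ x, x ^ s ∂(gammaMeasure a (1/2)) = 2 ^ s * (Real.Gamma (a + s) / Real.Gamma a) := by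
  have hr : (0:ℝ) < 1/2 := by norm_num
  set r : ℝ := 1/2 with hrdef
  -- density as NNReal-valued function
  set f : ℝ → ℝ≥0 := fun x => (gammaPDFReal a r x).toNNReal with hf
  have hfmeas : Measurable f := (measurable_gammaPDFReal a r).real_toNNReal
  have hmeq : gammaMeasure a r = volume.withDensity (fun x => (f x : ℝ≥0∞)) := rfl
  -- the real product function
  set h : ℝ → ℝ := fun x => gammaPDFReal a r x * x ^ s with hh
  have hsmul : ∀ x, f x • (x ^ s) = h x := by
    intro x
    simp only [hf, hh, NNReal.smul_def, NNReal.coe_mk,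
      Real.coe_toNNReal _ (gammaPDFReal_nonneg ha hr x), smul_eq_mul]
  -- h vanishes off Ioi 0
  have hzero : ∀ x : ℝ, x ∉ Ioi 0 → h x = 0 := by
    intro x hx
    simp only [mem_Ioi, not_lt] at hx
    rcases lt_or_eq_of_le hx with hlt | heq
    · simp [hh, gammaPDFReal, not_le.2 hlt]
    · subst heq; simp [hh, Real.zero_rpow hs]
  have hsupp : Function.support h ⊆ Ioi (0:ℝ) := by
    intro x hx
    by_contra hc
    exact hx (hzero x hc)
  -- on Ioi 0, h = C * x^(a+s-1) * exp (-(r*x))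
  have hC : ∀ x ∈ Ioi (0:ℝ), h x = r ^ a / Real.Gamma a * (x ^ (a + s - 1) * Real.exp (-(r * x))) := by
    intro x hx
    have hx' : (0:ℝ) < x := hx
    simp only [hh, gammaPDFReal, if_pos hx'.le]
    rw [show a + s - 1 = (a - 1) + s by ring, Real.rpow_add hx']
    ring
  -- integrability on Ioi 0
  have hion : IntegrableOn (fun x : ℝ => x ^ (a + s - 1) * Real.exp (-(r * x))) (Ioi 0) := by
    have := integrableOn_rpow_mul_exp_neg_mul_rpow (p := 1) (s := a + s - 1) (b := r)
      (by linarith) zero_lt_one hr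
    apply this.congr_fun _ measurableSet_Ioi
    intro x _
    simp [Real.rpow_one]
  have hionh : IntegrableOn h (Ioi 0) := by
    apply IntegrableOn.congr_fun (hion.const_mul (r ^ a / Real.Gamma a)) _ measurableSet_Ioi
    intro x hx
    exact (hC x hx).symm
  have hint : Integrable h :=
    (integrableOn_iff_integrable_of_support_subset hsupp).1 hionh
  -- conclude integrability
  have hint2 : Integrable (fun x : ℝ => x ^ s) (gammaMeasure a r) := by
    rw [hmeq, integrable_withDensity_iff_integrable_smul hfmeas]
    exact hint.congr (Filter.Eventually.of_forall fun x => (hsmul x).symm)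
  refine ⟨hint2, ?_⟩
  rw [hmeq, integral_withDensity_eq_integral_smul hfmeas]
  calc ∫ x, f x • (x ^ s) = ∫ x, h x := by
        exact integral_congr_ae (Filter.Eventually.of_forall hsmul)
    _ = ∫ x in Ioi (0:ℝ), h x :=
        (setIntegral_eq_integral_of_forall_compl_eq_zero hzero).symm
    _ = ∫ x in Ioi (0:ℝ), r ^ a / Real.Gamma a * (x ^ (a + s - 1) * Real.exp (-(r * x))) :=
        setIntegral_congr_fun measurableSet_Ioi hC
    _ = r ^ a / Real.Gamma a * ∫ x in Ioi (0:ℝ), x ^ ((a + s) - 1) * Real.exp (-(r * x)) := by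
        rw [integral_const_mul]
    _ = r ^ a / Real.Gamma a * ((1/r) ^ (a+s) * Real.Gamma (a + s)) := by
        rw [integral_rpow_mul_exp_neg_mul_Ioi has hr]
    _ = 2 ^ s * (Real.Gamma (a + s) / Real.Gamma a) := by
        rw [hrdef]
        rw [show ((1:ℝ)/(1/2)) = 2 by norm_num]
        rw [show ((1:ℝ)/2) = 2⁻¹ by norm_num, Real.inv_rpow (by norm_num : (0:ℝ) ≤ 2),
          Real.rpow_add (by norm_num : (0:ℝ) < 2)]
        field_simp

lemma Radd {u v p : ℝ} (hu : 0 ≤ u) (hv : 0 ≤ v) (hp : 1 ≤ p) :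
    (u + v) ^ p ≤ 2 ^ (p-1) * (u ^ p + v ^ p) := by
  have h := NNReal.rpow_add_le_mul_rpow_add_rpow u.toNNReal v.toNNReal hp
  have h2 := NNReal.coe_le_coe.2 h
  push_cast at h2
  rwa [Real.coe_toNNReal _ hu, Real.coe_toNNReal _ hv] at h2

lemma AEPOS (a r : ℝ) : ∀ᵐ z ∂(gammaMeasure a r), 0 < z := by
  rw [ae_iff]
  have hset : {z : ℝ | ¬ 0 < z} = Iic 0 := by ext z; simp
  rw [hset, gammaMeasure, withDensity_apply _ measurableSet_Iic,
    lintegral_Iic_eq_lintegral_Iio_add_Icc _ le_rfl,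
    lintegral_gammaPDF_of_nonpos le_rfl, Set.Icc_self,
    setLIntegral_measure_zero _ _ Real.volume_singleton, zero_add]

lemma core {a : ℝ} (ha : 1/2 ≤ a) {lam : ℝ} (hl : 0 < lam) (hl2 : lam ≤ a/2)
    {n : ℕ} (hn : 0 < n) :
    Integrable (fun x => Real.exp (lam * (x - Real.log (2*a/n))) +
        Real.exp (-(lam * (x - Real.log (2*a/n)))))
      ((gammaMeasure a (1/2)).map fun z => Real.log (z/n)) ∧
    (∫ x, (Real.exp (lam * (x - Real.log (2*a/n))) +
        Real.exp (-(lam * (x - Real.log (2*a/n)))))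
      ∂((gammaMeasure a (1/2)).map fun z => Real.log (z/n))) ≤ 6 * Real.exp (2*lam^2/a) := by
  have ha0 : (0:ℝ) < a := by linarith
  have hb0 : (0:ℝ) < a - lam := by linarith
  have h2a : (0:ℝ) < 2*a := by linarith
  have hn' : (0:ℝ) < n := by exact_mod_cast hn
  set c₀ : ℝ := Real.log (2*a/n) with hc₀
  set μ := gammaMeasure a (1/2) with hμ
  set φ : ℝ → ℝ := fun z => Real.log (z/n) with hφdef
  have hφ : Measurable φ := Real.measurable_log.comp (measurable_id.div_const _)
  set f : ℝ → ℝ := fun x => Real.exp (lam * (x - c₀)) + Real.exp (-(lam * (x - c₀))) with hfdef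
  have hf : Measurable f := by
    apply Measurable.add
    · exact (((measurable_id.sub_const c₀).const_mul lam)).exp
    · exact (((measurable_id.sub_const c₀).const_mul lam)).neg.exp
  set G : ℝ → ℝ := fun z => (2*a) ^ (-lam) * z ^ lam + (2*a) ^ lam * z ^ (-lam) with hGdef
  have heq : ∀ z : ℝ, 0 < z → f (φ z) = G z := by
    intro z hz
    have h1 : φ z - c₀ = Real.log z - Real.log (2*a) := by
      rw [hφdef, hc₀]
      simp only
      rw [Real.log_div hz.ne' hn'.ne', Real.log_div h2a.ne' hn'.ne']
      ring
    have e1 : Real.exp (lam * (Real.log z - Real.log (2*a))) = (2*a) ^ (-lam) * z ^ lam := by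
      rw [Real.rpow_def_of_pos hz, Real.rpow_def_of_pos h2a, ← Real.exp_add]
      congr 1
      ring
    have e2 : Real.exp (-(lam * (Real.log z - Real.log (2*a)))) = (2*a) ^ lam * z ^ (-lam) := by
      rw [Real.rpow_def_of_pos hz, Real.rpow_def_of_pos h2a, ← Real.exp_add]
      congr 1
      ring
    rw [hfdef, hGdef]
    simp only
    rw [h1, e1, e2]
  have hL2p := L2 (s := lam) ha0 (by linarith) hl.ne'
  have hL2m := L2 (s := -lam) ha0 (by linarith) (by simpa using hl.ne')
  have hG : Integrable G μ := by
    exact ((hL2p.1.const_mul _).add (hL2m.1.const_mul _))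
  have haepos := AEPOS a (1/2)
  have hGf : (fun z => f (φ z)) =ᵐ[μ] G := by
    filter_upwards [haepos] with z hz using heq z hz
  have hint : Integrable f (μ.map φ) := by
    rw [integrable_map_measure hf.aestronglyMeasurable hφ.aemeasurable]
    exact hG.congr hGf.symm
  refine ⟨hint, ?_⟩
  rw [integral_map hφ.aemeasurable hf.aestronglyMeasurable]
  have hval : ∫ z, f (φ z) ∂μ = (2*a) ^ (-lam) * (2 ^ lam * (Real.Gamma (a + lam) / Real.Gamma a))
      + (2*a) ^ lam * (2 ^ (-lam) * (Real.Gamma (a + -lam) / Real.Gamma a)) := by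
    rw [integral_congr_ae hGf, hGdef]
    rw [integral_add (hL2p.1.const_mul _) (hL2m.1.const_mul _),
      integral_const_mul, integral_const_mul, hL2p.2, hL2m.2]
  rw [hval]
  -- algebra : (2a)^(-lam) * 2^lam = a^(-lam), (2a)^lam * 2^(-lam) = a^lam
  have hr2 : (0:ℝ) < 2 := by norm_num
  have alg0 : (2:ℝ) ^ (-lam) * (2:ℝ) ^ lam = 1 := by
    rw [← Real.rpow_add hr2]; norm_num
  have alg1 : (2*a) ^ (-lam) * (2:ℝ) ^ lam = a ^ (-lam) := by
    rw [Real.mul_rpow hr2.le ha0.le]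
    calc (2:ℝ) ^ (-lam) * a ^ (-lam) * 2 ^ lam
        = ((2:ℝ) ^ (-lam) * 2 ^ lam) * a ^ (-lam) := by ring
      _ = a ^ (-lam) := by rw [alg0]; ring
  have alg2 : (2*a) ^ lam * (2:ℝ) ^ (-lam) = a ^ lam := by
    rw [Real.mul_rpow hr2.le ha0.le]
    calc (2:ℝ) ^ lam * a ^ lam * 2 ^ (-lam)
        = ((2:ℝ) ^ (-lam) * 2 ^ lam) * a ^ lam := by ring
      _ = a ^ lam := by rw [alg0]; ring
  have hGam := Real.Gamma_pos_of_pos ha0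
  have hGamb := Real.Gamma_pos_of_pos hb0
  -- bound A
  have hA : a ^ (-lam) * (Real.Gamma (a + lam) / Real.Gamma a) ≤ Real.exp (lam^2/a) := by
    have h4 := L4 ha0 hl.le
    have step1 : a ^ (-lam) * (Real.Gamma (a + lam) / Real.Gamma a) ≤
        a ^ (-lam) * (a + lam) ^ lam := by
      apply mul_le_mul_of_nonneg_left _ (by positivity)
      rw [div_le_iff₀ hGam, mul_comm]
      exact h4
    have step2 : a ^ (-lam) * (a + lam) ^ lam = ((a + lam)/a) ^ lam := by
      rw [Real.div_rpow (by linarith) ha0.le, Real.rpow_neg ha0.le, mul_comm, div_eq_mul_inv]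
    have step3 : ((a + lam)/a) ^ lam ≤ Real.exp (lam^2/a) := by
      have e1 : (a + lam)/a = 1 + lam/a := by field_simp
      have e2 : 1 + lam/a ≤ Real.exp (lam/a) := by
        have := Real.add_one_le_exp (lam/a); linarith
      calc ((a + lam)/a) ^ lam ≤ (Real.exp (lam/a)) ^ lam := by
            apply Real.rpow_le_rpow (by rw[e1]; positivity) (by rw [e1]; exact e2) hl.le
        _ = Real.exp (lam/a * lam) := by
            rw [← Real.exp_mul]
        _ = Real.exp (lam^2/a) := by
            congr 1
            rw [div_mul_eq_mul_div, ← sq]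
    calc _ ≤ a ^ (-lam) * (a + lam) ^ lam := step1
      _ = ((a + lam)/a) ^ lam := step2
      _ ≤ _ := step3
  -- bound B
  have hB : a ^ lam * (Real.Gamma (a + -lam) / Real.Gamma a) ≤ 5 * Real.exp (2*lam^2/a) := by
    set b := a - lam with hbdef
    have hab : a + -lam = b := by rw [hbdef]; ring
    have hba' : b + lam = a := by rw [hbdef]; ring
    have h5 := L5 hb0 hl.le
    rw [hba'] at h5
    have hD : (0:ℝ) < Real.Gamma b * b ^ lam * (b/(b+1)) := by positivity
    have step1 : Real.Gamma b / Real.Gamma a ≤ (b+1)/(b ^ lam * b) := by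
      rw [div_le_div_iff₀ hGam (by positivity)]
      calc Real.Gamma b * (b ^ lam * b) = (Real.Gamma b * b ^ lam * (b/(b+1))) * (b+1) := by
            field_simp
        _ ≤ Real.Gamma a * (b+1) := by
            apply mul_le_mul_of_nonneg_right h5 (by positivity)
        _ = (b+1) * Real.Gamma a := by ring
    have step2 : a ^ lam * (Real.Gamma b / Real.Gamma a) ≤ (a/b) ^ lam * ((b+1)/b) := by
      rw [Real.div_rpow ha0.le hb0.le]
      calc a ^ lam * (Real.Gamma b / Real.Gamma a) ≤ a ^ lam * ((b+1)/(b ^ lam * b)) := by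
            apply mul_le_mul_of_nonneg_left step1 (by positivity)
        _ = a ^ lam / b ^ lam * ((b+1)/b) := by
            field_simp
    have step3 : (a/b) ^ lam ≤ Real.exp (2*lam^2/a) := by
      have e1 : a/b = 1 + lam/b := by
        rw [div_eq_iff hb0.ne', add_mul, one_mul, div_mul_cancel₀ _ hb0.ne', hba']
      have e2 : 1 + lam/b ≤ Real.exp (lam/b) := by
        have := Real.add_one_le_exp (lam/b); linarith
      have e3 : lam/b * lam ≤ 2*lam^2/a := by
        rw [div_mul_eq_mul_div, div_le_div_iff₀ hb0 ha0]
        have hba : a ≤ 2*b := by rw [hbdef]; linarith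
        nlinarith [sq_nonneg lam]
      calc (a/b) ^ lam ≤ (Real.exp (lam/b)) ^ lam := by
            apply Real.rpow_le_rpow (by rw [e1]; positivity) (by rw [e1]; exact e2) hl.le
        _ = Real.exp (lam/b * lam) := by rw [← Real.exp_mul]
        _ ≤ Real.exp (2*lam^2/a) := Real.exp_le_exp.2 e3
    have step4 : (b+1)/b ≤ 5 := by
      rw [div_le_iff₀ hb0]
      have : (1:ℝ)/4 ≤ b := by rw [hbdef]; linarith
      linarith
    rw [hab]
    calc a ^ lam * (Real.Gamma b / Real.Gamma a) ≤ (a/b) ^ lam * ((b+1)/b) := step2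
      _ ≤ Real.exp (2*lam^2/a) * 5 := by
          apply mul_le_mul step3 step4 (by positivity) (Real.exp_pos _).le
      _ = 5 * Real.exp (2*lam^2/a) := by ring
  have hAB : Real.exp (lam^2/a) ≤ Real.exp (2*lam^2/a) := by
    apply Real.exp_le_exp.2
    rw [div_le_div_iff₀ ha0 ha0]
    nlinarith [sq_nonneg lam]
  calc (2*a) ^ (-lam) * (2 ^ lam * (Real.Gamma (a + lam) / Real.Gamma a))
      + (2*a) ^ lam * (2 ^ (-lam) * (Real.Gamma (a + -lam) / Real.Gamma a))
      = a ^ (-lam) * (Real.Gamma (a + lam) / Real.Gamma a)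
        + a ^ lam * (Real.Gamma (a + -lam) / Real.Gamma a) := by
        rw [← alg1, ← alg2]; ring
    _ ≤ Real.exp (2*lam^2/a) + 5 * Real.exp (2*lam^2/a) := by
        apply add_le_add (le_trans hA hAB) hB
    _ = 6 * Real.exp (2*lam^2/a) := by ring



set_option maxHeartbeats 4000000 in
/-- Moment bounds for the centered random variable `t̄ = t − E[t]` with
`t ~ log((1/n) χ²_M)`, `M = n − j + 1`:
`(E|t̄|^p)^{1/p} ≤ C₁ max{√(p/M), p/M}` for all `p ≥ 1`. -/
theorem centered_log_chi_squared_moment_bound :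
    ∃ C1 : ℝ, 0 < C1 ∧
      ∀ (n j : ℕ), 1 ≤ j → j ≤ n →
      ∀ p : ℝ, 1 ≤ p →
        (∫ x, |x - ∫ y, y ∂((chiSqMeasure (n - j + 1)).map fun z => Real.log (z / n))| ^ p
            ∂((chiSqMeasure (n - j + 1)).map fun z => Real.log (z / n))) ^ (1 / p)
          ≤ C1 * max (Real.sqrt (p / ((n : ℝ) - j + 1))) (p / ((n : ℝ) - j + 1)) := by
  refine ⟨600, by norm_num, ?_⟩
  intro n j hj hjn p hp
  have hp0 : (0:ℝ) < p := by linarith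
  set M : ℕ := n - j + 1 with hMdef
  have hM1 : 1 ≤ M := Nat.le_add_left 1 (n - j)
  have hn0 : 0 < n := lt_of_lt_of_le hj hjn
  have hMcast : ((n:ℝ) - j + 1) = (M:ℝ) := by
    rw [hMdef]
    push_cast [Nat.cast_sub hjn]
    ring
  rw [hMcast]
  set a : ℝ := (M:ℝ)/2 with hadef
  have hM0 : (0:ℝ) < M := by exact_mod_cast hM1
  have hMa : (M:ℝ) = 2*a := by rw [hadef]; ring
  have ha : 1/2 ≤ a := by
    rw [hadef]
    have : (1:ℝ) ≤ (M:ℝ) := by exact_mod_cast hM1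
    linarith
  have ha0 : (0:ℝ) < a := by linarith
  have hch : chiSqMeasure M = gammaMeasure a (1/2) := rfl
  rw [hch]
  set ν := (gammaMeasure a (1/2)).map fun z => Real.log (z / (n:ℝ)) with hν
  haveI hprobμ : IsProbabilityMeasure (gammaMeasure a (1/2)) :=
    isProbabilityMeasure_gammaMeasure ha0 (by norm_num)
  have hφm : Measurable fun z : ℝ => Real.log (z / (n:ℝ)) :=
    Real.measurable_log.comp (measurable_id.div_const _)
  haveI hprobν : IsProbabilityMeasure ν := Measure.isProbabilityMeasure_map hφm.aemeasurable
  set c₀ : ℝ := Real.log (2*a/(n:ℝ)) with hc₀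
  set Mx : ℝ := max (Real.sqrt (p / (M:ℝ))) (p / (M:ℝ)) with hMx
  have hMx0 : 0 < Mx := lt_of_lt_of_le (by positivity : (0:ℝ) < p/(M:ℝ)) (le_max_right _ _)
  -- lambda for exponent q (q = p or q = 1)
  have hlam_fact : ∀ q : ℝ, 1 ≤ q →
      ∃ lam : ℝ, 0 < lam ∧ lam ≤ a/2 ∧ 2*lam^2/a ≤ q/2 ∧ q/lam ≤ 4 * max (Real.sqrt (q/(M:ℝ))) (q/(M:ℝ)) := by
    intro q hq
    have hq0 : (0:ℝ) < q := by linarith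
    refine ⟨min (Real.sqrt (q*a)) a / 2, ?_, ?_, ?_, ?_⟩
    · have h1 : 0 < Real.sqrt (q*a) := Real.sqrt_pos.2 (by positivity)
      have : 0 < min (Real.sqrt (q*a)) a := lt_min h1 ha0
      linarith
    · have : min (Real.sqrt (q*a)) a ≤ a := min_le_right _ _
      linarith
    · have h1 : min (Real.sqrt (q*a)) a ≤ Real.sqrt (q*a) := min_le_left _ _
      have h2 : (0:ℝ) ≤ min (Real.sqrt (q*a)) a := le_min (Real.sqrt_nonneg _) ha0.le
      have h3 : (min (Real.sqrt (q*a)) a)^2 ≤ q*a := by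
        calc (min (Real.sqrt (q*a)) a)^2 ≤ (Real.sqrt (q*a))^2 := by nlinarith [Real.sqrt_nonneg (q*a)]
          _ = q*a := Real.sq_sqrt (by positivity)
      rw [div_le_div_iff₀ (by positivity) (by norm_num : (0:ℝ) < 2)]
      nlinarith
    · rcases le_total (Real.sqrt (q*a)) a with hc | hc
      · have hmin : min (Real.sqrt (q*a)) a = Real.sqrt (q*a) := min_eq_left hc
        have hs0 : 0 < Real.sqrt (q*a) := Real.sqrt_pos.2 (by positivity)
        have key : q / (Real.sqrt (q*a) / 2) = 2 * Real.sqrt (q/a) := by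
          have s1 : Real.sqrt (q*a) * Real.sqrt (q/a) = q := by
            rw [← Real.sqrt_mul (by positivity)]
            rw [show q*a*(q/a) = q^2 from by field_simp]
            exact Real.sqrt_sq hq0.le
          have s2 : q / Real.sqrt (q*a) = Real.sqrt (q/a) := by
            rw [eq_comm, eq_div_iff hs0.ne', mul_comm]
            exact s1
          rw [div_div_eq_mul_div, mul_comm q 2, mul_div_assoc, s2]
        rw [hmin, key]
        have key2 : Real.sqrt (q/a) ≤ 2 * Real.sqrt (q/(M:ℝ)) := by
          have e1 : q/a = 4*(q/(M:ℝ))/2 := by rw [hMa]; field_simp; ring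
          rw [e1]
          have e2 : 4*(q/(M:ℝ))/2 ≤ 4*(q/(M:ℝ)) := by
            have : 0 ≤ q/(M:ℝ) := by positivity
            linarith
          calc Real.sqrt (4*(q/(M:ℝ))/2) ≤ Real.sqrt (4*(q/(M:ℝ))) := Real.sqrt_le_sqrt e2
            _ = 2 * Real.sqrt (q/(M:ℝ)) := by
                rw [Real.sqrt_mul (by norm_num : (0:ℝ) ≤ 4), show Real.sqrt 4 = 2 from by
                  rw [show (4:ℝ) = 2^2 by norm_num, Real.sqrt_sq (by norm_num : (0:ℝ) ≤ 2)]]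
        calc 2 * Real.sqrt (q/a) ≤ 2 * (2 * Real.sqrt (q/(M:ℝ))) := by linarith
          _ = 4 * Real.sqrt (q/(M:ℝ)) := by ring
          _ ≤ 4 * max (Real.sqrt (q/(M:ℝ))) (q/(M:ℝ)) := by
              have := le_max_left (Real.sqrt (q/(M:ℝ))) (q/(M:ℝ)); linarith
      · have hmin : min (Real.sqrt (q*a)) a = a := min_eq_right hc
        rw [hmin]
        have key : q / (a/2) = 4 * (q/(M:ℝ)) := by
          rw [hMa]; field_simp; ring
        rw [key]
        have := le_max_right (Real.sqrt (q/(M:ℝ))) (q/(M:ℝ))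
        nlinarith [Real.sqrt_nonneg (q/(M:ℝ))]
  obtain ⟨lam, hl0, hl2, hlexp, hlq⟩ := hlam_fact p hp
  obtain ⟨lam1, hl10, hl12, hlexp1, hlq1⟩ := hlam_fact 1 le_rfl
  obtain ⟨hint_p, hbound_p⟩ := core ha hl0 hl2 hn0
  obtain ⟨hint_1, hbound_1⟩ := core ha hl10 hl12 hn0
  -- notation for the dominating functions
  set f1 : ℝ → ℝ := fun x => Real.exp (lam1 * (x - c₀)) + Real.exp (-(lam1 * (x - c₀))) with hf1
  set fp : ℝ → ℝ := fun x => Real.exp (lam * (x - c₀)) + Real.exp (-(lam * (x - c₀))) with hfp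
  have hf1pos : ∀ x, 0 < f1 x := fun x => by positivity
  have hfppos : ∀ x, 0 < fp x := fun x => by positivity
  have hf1m : Measurable f1 :=
    (((measurable_id.sub_const c₀).const_mul lam1)).exp.add
      (((measurable_id.sub_const c₀).const_mul lam1)).neg.exp
  -- integrability of x - c₀
  have habs_le : ∀ x : ℝ, |x - c₀| ≤ (1/lam1) * f1 x := by
    intro x
    have := L1 (u := x - c₀) le_rfl hl10
    rwa [Real.rpow_one, Real.rpow_one] at this
  have hF3 : Integrable (fun x => x - c₀) ν := by
    apply Integrable.mono' (hint_1.const_mul (1/lam1))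
      ((measurable_id.sub_const c₀).aestronglyMeasurable)
    filter_upwards with x
    rw [Real.norm_eq_abs]
    exact habs_le x
  have hF4 : Integrable (fun x : ℝ => x) ν := by
    exact (hF3.add (integrable_const c₀)).congr
      (Filter.Eventually.of_forall fun x => by show x - c₀ + c₀ = x; ring)
  set m : ℝ := ∫ y, y ∂ν with hm
  have hmc : m - c₀ = ∫ x, (x - c₀) ∂ν := by
    rw [integral_sub hF4 (integrable_const c₀), integral_const]
    simp [hm]
  -- bound B
  have hS1 : (∫ x, f1 x ∂ν) ≤ 6 * Real.exp (1/2) := by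
    calc (∫ x, f1 x ∂ν) ≤ 6 * Real.exp (2*lam1^2/a) := hbound_1
      _ ≤ 6 * Real.exp (1/2) := by
          have := Real.exp_le_exp.2 hlexp1
          linarith
  have hB : |m - c₀| ≤ 24 * Real.exp 1 * Mx := by
    have h1 : |m - c₀| ≤ ∫ x, |x - c₀| ∂ν := by
      rw [hmc]
      have := norm_integral_le_integral_norm (μ := ν) (fun x => x - c₀)
      simpa [Real.norm_eq_abs] using this
    have h2 : (∫ x, |x - c₀| ∂ν) ≤ ∫ x, (1/lam1) * f1 x ∂ν := by
      apply integral_mono hF3.abs (hint_1.const_mul (1/lam1))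
      intro x
      exact habs_le x
    have h3 : (∫ x, (1/lam1) * f1 x ∂ν) = (1/lam1) * ∫ x, f1 x ∂ν := integral_const_mul _ _
    have h4 : (1:ℝ)/lam1 ≤ 4 * Mx := by
      have hmax : max (Real.sqrt (1/(M:ℝ))) (1/(M:ℝ)) ≤ Mx := by
        apply max_le
        · apply le_trans _ (le_max_left (Real.sqrt (p/(M:ℝ))) (p/(M:ℝ)))
          apply Real.sqrt_le_sqrt
          gcongr
        · apply le_trans _ (le_max_right (Real.sqrt (p/(M:ℝ))) (p/(M:ℝ)))
          gcongr
      calc (1:ℝ)/lam1 ≤ 4 * max (Real.sqrt (1/(M:ℝ))) (1/(M:ℝ)) := by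
            simpa using hlq1
        _ ≤ 4 * Mx := by linarith
    have h5 : (1/lam1) * ∫ x, f1 x ∂ν ≤ (4*Mx) * (6 * Real.exp (1/2)) := by
      have hMx4 : (0:ℝ) ≤ 4 * Mx := by linarith
      exact mul_le_mul h4 hS1 (integral_nonneg fun x => (hf1pos x).le) hMx4
    calc |m - c₀| ≤ (1/lam1) * ∫ x, f1 x ∂ν := by rw [← h3]; exact le_trans h1 h2
      _ ≤ (4*Mx) * (6 * Real.exp (1/2)) := h5
      _ ≤ 24 * Real.exp 1 * Mx := by
          have he : Real.exp (1/2) ≤ Real.exp 1 := Real.exp_le_exp.2 (by norm_num)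
          have he0 : 0 < Real.exp (1/2) := Real.exp_pos _
          nlinarith [hMx0.le, Real.exp_pos 1]
  -- final assembly
  set K : ℝ := 24 * Real.exp 1 * Mx with hK
  have hK0 : (0:ℝ) ≤ K := by
    rw [hK]
    exact mul_nonneg (mul_nonneg (by norm_num) (Real.exp_pos 1).le) hMx0.le
  have hpt : ∀ x : ℝ, |x - m| ^ p ≤ 2^(p-1) * ((p/lam)^p * fp x + K^p) := by
    intro x
    have t1 : |x - m| ≤ |x - c₀| + K := by
      have e1 : x - m = (x - c₀) + (c₀ - m) := by ring
      have h1 : |x - m| ≤ |x - c₀| + |c₀ - m| := by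
        rw [e1]; exact abs_add_le _ _
      have h2 : |c₀ - m| = |m - c₀| := abs_sub_comm _ _
      rw [h2] at h1
      linarith [hB]
    have t2 : |x - m|^p ≤ (|x - c₀| + K)^p :=
      Real.rpow_le_rpow (abs_nonneg _) t1 hp0.le
    have t3 : (|x - c₀| + K)^p ≤ 2^(p-1) * (|x - c₀|^p + K^p) := Radd (abs_nonneg _) hK0 hp
    have t4 : |x - c₀|^p ≤ (p/lam)^p * fp x := L1 hp hl0
    have t5 : 2^(p-1) * (|x-c₀|^p + K^p) ≤ 2^(p-1) * ((p/lam)^p * fp x + K^p) := by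
      apply mul_le_mul_of_nonneg_left _ (Real.rpow_nonneg (by norm_num) _)
      linarith
    linarith
  have hGint : Integrable (fun x => 2^(p-1) * ((p/lam)^p * fp x + K^p)) ν :=
    ((hint_p.const_mul ((p/lam)^p)).add (integrable_const (K^p))).const_mul _
  have hSp0 : (0:ℝ) ≤ ∫ x, fp x ∂ν := integral_nonneg fun x => (hfppos x).le
  have hIbound : (∫ x, |x - m|^p ∂ν) ≤ 2^(p-1) * ((p/lam)^p * (∫ x, fp x ∂ν) + K^p) := by
    calc ∫ x, |x - m|^p ∂ν ≤ ∫ x, 2^(p-1) * ((p/lam)^p * fp x + K^p) ∂ν := by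
          apply integral_mono_of_nonneg
            (Filter.Eventually.of_forall fun x => Real.rpow_nonneg (abs_nonneg _) p) hGint
            (Filter.Eventually.of_forall hpt)
      _ = 2^(p-1) * ((p/lam)^p * (∫ x, fp x ∂ν) + K^p) := by
          rw [integral_const_mul, integral_add (hint_p.const_mul _) (integrable_const _),
            integral_const_mul, integral_const, probReal_univ, one_smul]
  have hSp : (∫ x, fp x ∂ν) ≤ 6 * Real.exp (p/2) := by
    refine le_trans hbound_p ?_
    have := Real.exp_le_exp.2 hlexp
    linarith
  have hplamMx : p/lam ≤ 4*Mx := hlq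
  have hexphalf : Real.exp (p/2) = (Real.exp (1/2))^p := by
    rw [← Real.exp_mul]
    congr 1
    ring
  have hstep : (p/lam)^p * (∫ x, fp x ∂ν) ≤ 6 * K^p := by
    have b1 : (p/lam)^p ≤ (4*Mx)^p :=
      Real.rpow_le_rpow (div_nonneg hp0.le hl0.le) hplamMx hp0.le
    have b2 : (p/lam)^p * (∫ x, fp x ∂ν) ≤ (4*Mx)^p * (6 * Real.exp (p/2)) := by
      apply mul_le_mul b1 hSp hSp0 (Real.rpow_nonneg (by nlinarith [hMx0]) _)
    have b3 : (4*Mx)^p * (6 * Real.exp (p/2)) = 6 * ((4*Mx) * Real.exp (1/2))^p := by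
      rw [hexphalf, Real.mul_rpow (by nlinarith [hMx0] : (0:ℝ) ≤ 4*Mx) (Real.exp_pos _).le]
      ring
    have b4 : ((4*Mx) * Real.exp (1/2))^p ≤ K^p := by
      apply Real.rpow_le_rpow
        (mul_nonneg (by nlinarith [hMx0]) (Real.exp_pos _).le) _ hp0.le
      rw [hK]
      have he : Real.exp (1/2) ≤ Real.exp 1 := Real.exp_le_exp.2 (by norm_num)
      have hh1 := mul_le_mul_of_nonneg_right he hMx0.le
      have hh2 := mul_nonneg (Real.exp_pos 1).le hMx0.le
      nlinarith [hh1, hh2]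
    calc (p/lam)^p * (∫ x, fp x ∂ν) ≤ (4*Mx)^p * (6 * Real.exp (p/2)) := b2
      _ = 6 * ((4*Mx) * Real.exp (1/2))^p := b3
      _ ≤ 6 * K^p := by linarith
  have h23 : (2:ℝ)^(3:ℝ) = 8 := by
    rw [show (3:ℝ) = ((3:ℕ):ℝ) by norm_num, Real.rpow_natCast]
    norm_num
  have hfinal1 : (∫ x, |x - m|^p ∂ν) ≤ 2^(p+2) * K^p := by
    have c1 : 2^(p-1) * ((p/lam)^p * (∫ x, fp x ∂ν) + K^p) ≤ 2^(p-1) * (7 * K^p) := by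
      apply mul_le_mul_of_nonneg_left _ (Real.rpow_nonneg (by norm_num) _)
      have hKp : (0:ℝ) ≤ K^p := Real.rpow_nonneg hK0 _
      linarith
    have c2 : (2:ℝ)^(p-1) * 7 ≤ 2^(p+2) := by
      rw [show p+2 = (p-1) + 3 by ring, Real.rpow_add (by norm_num : (0:ℝ) < 2), h23]
      have hc : (0:ℝ) ≤ 2^(p-1) := (Real.rpow_pos_of_pos (by norm_num) _).le
      exact mul_le_mul_of_nonneg_left (by norm_num) hc
    have hKp : (0:ℝ) ≤ K^p := Real.rpow_nonneg hK0 _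
    calc (∫ x, |x - m|^p ∂ν) ≤ 2^(p-1) * ((p/lam)^p * (∫ x, fp x ∂ν) + K^p) := hIbound
      _ ≤ 2^(p-1) * (7 * K^p) := c1
      _ = (2^(p-1) * 7) * K^p := by ring
      _ ≤ 2^(p+2) * K^p := mul_le_mul_of_nonneg_right c2 hKp
  have hintnn : (0:ℝ) ≤ ∫ x, |x - m|^p ∂ν :=
    integral_nonneg fun x => Real.rpow_nonneg (abs_nonneg _) p
  have hfinal2 : (∫ x, |x - m|^p ∂ν)^(1/p) ≤ (2^(p+2) * K^p)^(1/p) :=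
    Real.rpow_le_rpow hintnn hfinal1 (by positivity)
  have hfinal3 : ((2:ℝ)^(p+2) * K^p)^(1/p) ≤ 8 * K := by
    have e1 : ((2:ℝ)^(p+2) * K^p)^(1/p) = ((2:ℝ)^(p+2))^(1/p) * (K^p)^(1/p) :=
      Real.mul_rpow (Real.rpow_nonneg (by norm_num) _) (Real.rpow_nonneg hK0 _)
    have e2 : ((K:ℝ)^p)^(1/p) = K := by
      rw [← Real.rpow_mul hK0, mul_one_div_cancel hp0.ne', Real.rpow_one]
    have e3 : ((2:ℝ)^(p+2))^(1/p) ≤ 8 := by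
      rw [← Real.rpow_mul (by norm_num : (0:ℝ) ≤ 2)]
      rw [← h23]
      apply Real.rpow_le_rpow_of_exponent_le (by norm_num)
      rw [mul_one_div]
      rw [div_le_iff₀ hp0]
      linarith
    rw [e1, e2]
    exact mul_le_mul_of_nonneg_right e3 hK0
  calc (∫ x, |x - m|^p ∂ν)^(1/p) ≤ (2^(p+2) * K^p)^(1/p) := hfinal2
    _ ≤ 8 * K := hfinal3
    _ ≤ 600 * Mx := by
        rw [hK]
        have he : Real.exp 1 < 2.7182818286 := Real.exp_one_lt_d9
        nlinarith [hMx0]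
end

section
/- Fix positive integers n, q, m satisfying 4 ≤ m ≤ q ≤ n. Then (m/(2n))·log(q/n) − (1/n)·Σ_{j=n−q+1}^{n−q+m} μ_{n,j} ≥ (m−1)²/(4nq), where μ_{n,j} := E[(1/2)·log((1/n)·χ²_{n−j+1})]. -/
open MeasureTheory ProbabilityTheory Real

/-- `μ_{n,j} = E[(1/2) log((1/n) χ²_{n-j+1})]`. -/
noncomputable def muNK (n j : ℕ) : ℝ :=
  ∫ x, (1 / 2 : ℝ) * Real.log (x / n) ∂(chiSqMeasure (n - j + 1))

open Set
open scoped NNReal ENNReal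

private lemma aux_int {s b : ℝ} (hs : -1 < s) (hb : 0 < b) :
    MeasureTheory.IntegrableOn (fun x : ℝ => x ^ s * Real.exp (-(b * x))) (Set.Ioi 0) := by
  have h := integrableOn_rpow_mul_exp_neg_mul_rpow hs zero_lt_one hb
  refine h.congr_fun (fun x _ => ?_) measurableSet_Ioi
  beta_reduce
  rw [Real.rpow_one, neg_mul]

private lemma abs_log_le {x : ℝ} (hx : 0 < x) :
    |Real.log x| ≤ 4 * x ^ (-(1/4) : ℝ) + x := by
  rcases le_or_gt 1 x with h | h
  · rw [abs_of_nonneg (Real.log_nonneg h)]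
    have h1 : Real.log x ≤ x - 1 := Real.log_le_sub_one_of_pos hx
    have hp : 0 < x ^ (-(1/4) : ℝ) := Real.rpow_pos_of_pos hx _
    linarith
  · rw [abs_of_nonpos (Real.log_nonpos hx.le h.le)]
    have htp : 0 < x ^ (-(1/4) : ℝ) := Real.rpow_pos_of_pos hx _
    have hlt : Real.log (x ^ (-(1/4) : ℝ)) = -(1/4) * Real.log x := Real.log_rpow hx _
    have h2 : Real.log (x ^ (-(1/4) : ℝ)) ≤ x ^ (-(1/4) : ℝ) - 1 :=
      Real.log_le_sub_one_of_pos htp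
    linarith

private lemma ae_ne_zero_real : ∀ᵐ x : ℝ, x ≠ 0 := by
  rw [ae_iff]
  have h : {x : ℝ | ¬ x ≠ 0} = {(0:ℝ)} := by ext x; simp
  rw [h]
  exact measure_singleton 0

private lemma gammaPDFReal_of_neg {a r x : ℝ} (hx : x < 0) :
    ProbabilityTheory.gammaPDFReal a r x = 0 := by
  simp [ProbabilityTheory.gammaPDFReal, not_le.mpr hx]

private lemma gamma_ae_pos {a r : ℝ} (_ha : 0 < a) (_hr : 0 < r) :
    ∀ᵐ x ∂(gammaMeasure a r), 0 < x := by
  rw [ae_iff]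
  have h : {x : ℝ | ¬ 0 < x} = Set.Iic 0 := by ext x; simp [not_lt]
  rw [h, gammaMeasure, withDensity_apply _ measurableSet_Iic]
  have h0 : ∀ᵐ x ∂(volume.restrict (Set.Iic 0)), gammaPDF a r x = 0 := by
    filter_upwards [ae_restrict_mem measurableSet_Iic,
      ae_ne_zero_real.filter_mono (ae_mono Measure.restrict_le_self)] with x hx hx0
    exact gammaPDF_of_neg (lt_of_le_of_ne hx hx0)
  rw [lintegral_congr_ae h0, lintegral_zero]

private lemma integral_gamma {a r : ℝ} (ha : 0 < a) (hr : 0 < r) (g : ℝ → ℝ) :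
    ∫ x, g x ∂(gammaMeasure a r) = ∫ x, gammaPDFReal a r x * g x := by
  rw [gammaMeasure]
  have hd : gammaPDF a r = fun x => ((Real.toNNReal (gammaPDFReal a r x) : ℝ≥0) : ℝ≥0∞) := rfl
  have hmeas : Measurable fun x => Real.toNNReal (gammaPDFReal a r x) :=
    (measurable_gammaPDFReal a r).real_toNNReal
  rw [hd, integral_withDensity_eq_integral_smul hmeas]
  refine integral_congr_ae (Filter.Eventually.of_forall fun x => ?_)
  dsimp only
  rw [NNReal.smul_def, smul_eq_mul, Real.coe_toNNReal _ (gammaPDFReal_nonneg ha hr x)]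

private lemma integrable_gamma_iff {a r : ℝ} (ha : 0 < a) (hr : 0 < r) {g : ℝ → ℝ} :
    Integrable g (gammaMeasure a r) ↔
      Integrable (fun x => g x * gammaPDFReal a r x) volume := by
  rw [gammaMeasure]
  have hd : gammaPDF a r = fun x => ENNReal.ofReal (gammaPDFReal a r x) := rfl
  rw [hd, integrable_withDensity_iff (measurable_gammaPDFReal a r).ennreal_ofReal
    (Filter.Eventually.of_forall fun _ => ENNReal.ofReal_lt_top)]
  refine integrable_congr (Filter.Eventually.of_forall fun x => ?_)
  dsimp only
  rw [ENNReal.toReal_ofReal (gammaPDFReal_nonneg ha hr x)]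

private lemma integrable_mul_pdf {a r : ℝ} (ha : 0 < a) (hr : 0 < r) {g G : ℝ → ℝ}
    (hg : Measurable g) (hG : IntegrableOn G (Set.Ioi 0))
    (hb : ∀ x : ℝ, 0 < x → |g x| * gammaPDFReal a r x ≤ G x) :
    Integrable (fun x => g x * gammaPDFReal a r x) volume := by
  have hmeas : AEStronglyMeasurable (fun x => g x * gammaPDFReal a r x) volume :=
    (hg.mul (measurable_gammaPDFReal a r)).aestronglyMeasurable
  rw [← integrableOn_univ, ← Set.Iic_union_Ioi (a := (0:ℝ)), integrableOn_union]
  constructor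
  · have h0 : (fun x => g x * gammaPDFReal a r x)
        =ᵐ[volume.restrict (Set.Iic 0)] (fun _ => 0) := by
      filter_upwards [ae_restrict_mem measurableSet_Iic,
        ae_ne_zero_real.filter_mono (ae_mono Measure.restrict_le_self)] with x hx hx0
      rw [gammaPDFReal_of_neg (lt_of_le_of_ne hx hx0), mul_zero]
    exact (integrable_zero _ _ _).congr h0.symm
  · refine Integrable.mono' hG hmeas.restrict ?_
    refine (ae_restrict_iff' measurableSet_Ioi).mpr (Filter.Eventually.of_forall fun x hx => ?_)
    rw [norm_mul, Real.norm_eq_abs, Real.norm_eq_abs,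
      abs_of_nonneg (gammaPDFReal_nonneg ha hr x)]
    exact hb x hx

private lemma integrable_id_gamma {a r : ℝ} (ha : 0 < a) (hr : 0 < r) :
    Integrable (fun x : ℝ => x) (gammaMeasure a r) := by
  rw [integrable_gamma_iff ha hr]
  refine integrable_mul_pdf ha hr measurable_id
    (G := fun x => r ^ a / Real.Gamma a * (x ^ a * Real.exp (-(r * x))))
    ((aux_int (by linarith) hr).const_mul _) (fun x hx => ?_)
  rw [ProbabilityTheory.gammaPDFReal, if_pos hx.le, abs_of_pos hx]
  have hxa : x ^ a = x ^ (a - 1) * x := by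
    rw [← Real.rpow_add_one hx.ne' (a - 1), sub_add_cancel]
  rw [hxa]; ring_nf; exact le_rfl

private lemma integral_id_gamma {a r : ℝ} (ha : 0 < a) (hr : 0 < r) :
    ∫ x, x ∂(gammaMeasure a r) = a / r := by
  rw [integral_gamma ha hr]
  rw [← setIntegral_eq_integral_of_forall_compl_eq_zero (s := Set.Ioi 0) ?h0]
  case h0 =>
    intro x hx
    have hx' : x ≤ 0 := not_lt.mp (by simpa using hx)
    rcases hx'.lt_or_eq with h | h
    · rw [gammaPDFReal_of_neg h, zero_mul]
    · rw [h, mul_zero]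
  have hΓ : Real.Gamma a ≠ 0 := (Real.Gamma_pos_of_pos ha).ne'
  have hra : (0:ℝ) < r ^ a := Real.rpow_pos_of_pos hr a
  calc ∫ x in Set.Ioi 0, gammaPDFReal a r x * x
      = ∫ x in Set.Ioi 0, r ^ a / Real.Gamma a * (x ^ (a + 1 - 1) * Real.exp (-(r * x))) := by
        refine setIntegral_congr_fun measurableSet_Ioi fun x hx => ?_
        rw [ProbabilityTheory.gammaPDFReal, if_pos (le_of_lt hx)]
        have hxa : x ^ (a + 1 - 1) = x ^ (a - 1) * x := by
          rw [← Real.rpow_add_one hx.ne' (a - 1)]; ring_nf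
        rw [hxa]; ring
    _ = r ^ a / Real.Gamma a * ((1 / r) ^ (a + 1) * Real.Gamma (a + 1)) := by
        rw [integral_const_mul,
          integral_rpow_mul_exp_neg_mul_Ioi (by linarith) hr]
    _ = a / r := by
        rw [Real.Gamma_add_one ha.ne', Real.rpow_add (by positivity) a 1, Real.rpow_one,
          one_div, Real.inv_rpow hr.le]
        field_simp

private lemma integrable_log_gamma {n : ℕ} (hn : 1 ≤ n) {a r : ℝ} (ha : (1:ℝ)/2 ≤ a)
    (hr : 0 < r) :
    Integrable (fun x => Real.log (x / n)) (gammaMeasure a r) := by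
  have ha0 : 0 < a := by linarith
  have hn0 : (0:ℝ) < n := by exact_mod_cast hn
  have hln : 0 ≤ Real.log n := Real.log_nonneg (by exact_mod_cast hn)
  rw [integrable_gamma_iff ha0 hr]
  set C := r ^ a / Real.Gamma a with hC
  have hCpos : 0 < C := by
    have := Real.Gamma_pos_of_pos ha0
    have := Real.rpow_pos_of_pos hr a
    positivity
  refine integrable_mul_pdf ha0 hr (Real.measurable_log.comp (measurable_id.div_const _))
    (G := fun x => C * (4 * (x ^ (a - 1/4 - 1) * Real.exp (-(r * x)))
      + x ^ a * Real.exp (-(r * x))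
      + Real.log n * (x ^ (a - 1) * Real.exp (-(r * x))))) ?_ ?_
  · refine Integrable.const_mul ?_ _
    refine Integrable.add (Integrable.add ?_ ?_) ?_
    · exact (aux_int (by linarith) hr).const_mul _
    · exact aux_int (by linarith) hr
    · exact (aux_int (by linarith) hr).const_mul _
  · intro x hx
    have hE : 0 < Real.exp (-(r * x)) := Real.exp_pos _
    have hpd : gammaPDFReal a r x = C * (x ^ (a - 1) * Real.exp (-(r * x))) := by
      rw [ProbabilityTheory.gammaPDFReal, if_pos hx.le]; ring
    have hxp : (0:ℝ) < x ^ (a - 1) := Real.rpow_pos_of_pos hx _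
    have h1 : |Real.log (x / n)| ≤ |Real.log x| + Real.log n := by
      rw [Real.log_div hx.ne' hn0.ne']
      calc |Real.log x - Real.log n| ≤ |Real.log x| + |Real.log n| := abs_sub _ _
        _ = |Real.log x| + Real.log n := by rw [abs_of_nonneg hln]
    have h2 : |Real.log x| ≤ 4 * x ^ (-(1/4) : ℝ) + x := abs_log_le hx
    have key : |Real.log (x / n)| * gammaPDFReal a r x
        ≤ (4 * x ^ (-(1/4) : ℝ) + x + Real.log n) * (C * (x ^ (a - 1) * Real.exp (-(r * x)))) := by
      rw [hpd]
      exact mul_le_mul_of_nonneg_right (by linarith) (by positivity)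
    refine key.trans (le_of_eq ?_)
    have e1 : x ^ (-(1/4) : ℝ) * x ^ (a - 1) = x ^ (a - 1/4 - 1) := by
      rw [← Real.rpow_add hx]; ring_nf
    have e2 : x * x ^ (a - 1) = x ^ a := by
      rw [mul_comm, ← Real.rpow_add_one hx.ne' (a - 1), sub_add_cancel]
    calc (4 * x ^ (-(1/4) : ℝ) + x + Real.log n) * (C * (x ^ (a - 1) * Real.exp (-(r * x))))
        = C * (4 * ((x ^ (-(1/4) : ℝ) * x ^ (a - 1)) * Real.exp (-(r * x)))
          + (x * x ^ (a - 1)) * Real.exp (-(r * x))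
          + Real.log n * (x ^ (a - 1) * Real.exp (-(r * x)))) := by ring
      _ = _ := by rw [e1, e2]

private lemma key_bound (n k : ℕ) (hn : 1 ≤ n) (hk : 1 ≤ k) :
    ∫ x, (1 / 2 : ℝ) * Real.log (x / n) ∂(chiSqMeasure k)
      ≤ (1 / 2 : ℝ) * Real.log ((k : ℝ) / n) := by
  have hk0 : (0:ℝ) < k := by exact_mod_cast hk
  have hn0 : (0:ℝ) < n := by exact_mod_cast hn
  have ha : (0:ℝ) < (k : ℝ) / 2 := by positivity
  have ha2 : (1:ℝ)/2 ≤ (k : ℝ) / 2 := by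
    have : (1:ℝ) ≤ (k:ℝ) := by exact_mod_cast hk
    linarith
  have hr : (0:ℝ) < (1/2 : ℝ) := by norm_num
  have hμ : chiSqMeasure k = gammaMeasure ((k : ℝ) / 2) (1/2) := rfl
  rw [hμ]
  haveI : IsProbabilityMeasure (gammaMeasure ((k : ℝ) / 2) (1/2)) :=
    isProbabilityMeasure_gammaMeasure ha hr
  have hInt_log : Integrable (fun x => Real.log (x / n)) (gammaMeasure ((k : ℝ) / 2) (1/2)) :=
    integrable_log_gamma hn ha2 hr
  have hInt_id : Integrable (fun x : ℝ => x) (gammaMeasure ((k : ℝ) / 2) (1/2)) :=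
    integrable_id_gamma ha hr
  set c : ℝ := (1/2) * (Real.log ((k : ℝ) / n) - 1) with hc
  have hInt_g : Integrable (fun x : ℝ => x / (2 * (k:ℝ)) + c)
      (gammaMeasure ((k : ℝ) / 2) (1/2)) :=
    (hInt_id.div_const _).add (integrable_const c)
  have hmono : ∀ᵐ x ∂(gammaMeasure ((k : ℝ) / 2) (1/2)),
      (1 / 2 : ℝ) * Real.log (x / n) ≤ x / (2 * (k:ℝ)) + c := by
    filter_upwards [gamma_ae_pos ha hr] with x hx
    have h1 : Real.log (x / k) ≤ x / k - 1 :=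
      Real.log_le_sub_one_of_pos (div_pos hx hk0)
    have h2 : Real.log (x / n) = Real.log (x / k) + Real.log ((k : ℝ) / n) := by
      rw [← Real.log_mul (by positivity) (by positivity)]
      congr 1
      field_simp
    have h3 : x / (2 * (k:ℝ)) = (x / k) / 2 := by ring
    rw [h2, hc, h3]
    linarith
  calc ∫ x, (1 / 2 : ℝ) * Real.log (x / n) ∂(gammaMeasure ((k : ℝ) / 2) (1/2))
      ≤ ∫ x, (x / (2 * (k:ℝ)) + c) ∂(gammaMeasure ((k : ℝ) / 2) (1/2)) :=
        integral_mono_ae (hInt_log.const_mul _) hInt_g hmono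
    _ = (∫ x, x ∂(gammaMeasure ((k : ℝ) / 2) (1/2))) / (2 * (k:ℝ)) + c := by
        rw [integral_add (hInt_id.div_const _) (integrable_const c), integral_div,
          integral_const, probReal_univ, one_smul]
    _ = (1 / 2 : ℝ) * Real.log ((k : ℝ) / n) := by
        rw [integral_id_gamma ha hr, hc]
        field_simp
        ring

/-- Lower digamma-sum bound:
`(m/2n) log(q/n) − (1/n) Σ_{j=n−q+1}^{n−q+m} μ_{n,j} ≥ (m−1)²/(4nq)` for `4 ≤ m ≤ q ≤ n`. -/
theorem digamma_sum_lower_bound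
    (n q m : ℕ) (hm : 4 ≤ m) (hmq : m ≤ q) (hqn : q ≤ n) :
    ((m : ℝ) - 1) ^ 2 / (4 * n * q)
      ≤ (m : ℝ) / (2 * n) * Real.log ((q : ℝ) / n)
        - (n : ℝ)⁻¹ * ∑ j ∈ Finset.Icc (n - q + 1) (n - q + m), muNK n j := by
  have hn1 : 1 ≤ n := by omega
  have hn0 : (0:ℝ) < n := by exact_mod_cast hn1
  have hq0 : (0:ℝ) < q := by exact_mod_cast (by omega : 0 < q)
  have hm0 : (0:ℝ) < m := by exact_mod_cast (by omega : 0 < m)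
  -- reindex the sum
  have hre : ∑ j ∈ Finset.Icc (n - q + 1) (n - q + m), muNK n j
      = ∑ i ∈ Finset.range m, muNK n (n - q + 1 + i) := by
    rw [← Finset.Ico_add_one_right_eq_Icc, Finset.sum_Ico_eq_sum_range]
    have he : n - q + m + 1 - (n - q + 1) = m := by omega
    rw [he]
  -- per-term bound
  have hterm : ∀ i ∈ Finset.range m,
      muNK n (n - q + 1 + i) ≤ (1 / 2 : ℝ) * Real.log (((q : ℝ) - i) / n) := by
    intro i hi
    have him : i < m := Finset.mem_range.mp hi
    have hdof : n - (n - q + 1 + i) + 1 = q - i := by omega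
    have hqi : 1 ≤ q - i := by omega
    have hcast : ((q - i : ℕ) : ℝ) = (q : ℝ) - i := by
      have : i ≤ q := by omega
      exact Nat.cast_sub this
    have := key_bound n (q - i) hn1 hqi
    rw [hcast] at this
    unfold muNK
    rw [hdof]
    exact this
  have hsum : ∑ j ∈ Finset.Icc (n - q + 1) (n - q + m), muNK n j
      ≤ ∑ i ∈ Finset.range m, (1 / 2 : ℝ) * Real.log (((q : ℝ) - i) / n) := by
    rw [hre]; exact Finset.sum_le_sum hterm
  -- log-sum estimate
  have hlog : ∀ i ∈ Finset.range m,
      (i : ℝ) / q ≤ Real.log ((q : ℝ) / n) - Real.log (((q : ℝ) - i) / n) := by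
    intro i hi
    have him : i < m := Finset.mem_range.mp hi
    have hiq : (i : ℝ) < q := by
      have : i < q := lt_of_lt_of_le him hmq
      exact_mod_cast this
    have hqi0 : (0:ℝ) < (q : ℝ) - i := by linarith
    have h1 : Real.log (((q : ℝ) - i) / q) ≤ ((q : ℝ) - i) / q - 1 :=
      Real.log_le_sub_one_of_pos (div_pos hqi0 hq0)
    have h2 : Real.log (((q : ℝ) - i) / q)
        = Real.log (((q : ℝ) - i) / n) - Real.log ((q : ℝ) / n) := by
      rw [Real.log_div hqi0.ne' hq0.ne', Real.log_div hqi0.ne' hn0.ne',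
        Real.log_div hq0.ne' hn0.ne']
      ring
    have h3 : ((q : ℝ) - i) / q - 1 = -(i / q) := by field_simp; ring
    rw [h2, h3] at h1
    linarith
  have hgauss : ∑ i ∈ Finset.range m, (i : ℝ) = (m : ℝ) * ((m : ℝ) - 1) / 2 := by
    have h := Finset.sum_range_id_mul_two m
    have h' : ((∑ i ∈ Finset.range m, i) * 2 : ℕ) = (m * (m - 1) : ℕ) := h
    have hm1 : 1 ≤ m := by omega
    have hcast := congrArg (fun t : ℕ => (t : ℝ)) h'
    push_cast [Nat.cast_sub hm1] at hcast
    push_cast at hcast ⊢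
    linarith
  have hsum2 : (m : ℝ) * ((m : ℝ) - 1) / 2 / q
      ≤ (m : ℝ) * Real.log ((q : ℝ) / n)
        - ∑ i ∈ Finset.range m, Real.log (((q : ℝ) - i) / n) := by
    have h := Finset.sum_le_sum hlog
    rw [Finset.sum_sub_distrib, Finset.sum_const, Finset.card_range] at h
    have hL : ∑ i ∈ Finset.range m, (i : ℝ) / q
        = ((m : ℝ) * ((m : ℝ) - 1) / 2) / q := by
      rw [← Finset.sum_div, hgauss]
    rw [hL] at h
    simpa [nsmul_eq_mul] using h
  -- combine
  have hS : ∑ i ∈ Finset.range m, (1 / 2 : ℝ) * Real.log (((q : ℝ) - i) / n)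
      = (1 / 2 : ℝ) * ∑ i ∈ Finset.range m, Real.log (((q : ℝ) - i) / n) := by
    rw [Finset.mul_sum]
  have hninv : (0:ℝ) < (n : ℝ)⁻¹ := by positivity
  set L := ∑ i ∈ Finset.range m, Real.log (((q : ℝ) - i) / n) with hLdef
  set S := ∑ j ∈ Finset.Icc (n - q + 1) (n - q + m), muNK n j with hSdef
  have hS2 : S ≤ (1 / 2 : ℝ) * L := by rw [hSdef]; calc
    ∑ j ∈ Finset.Icc (n - q + 1) (n - q + m), muNK n j
        ≤ ∑ i ∈ Finset.range m, (1 / 2 : ℝ) * Real.log (((q : ℝ) - i) / n) := hsum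
    _ = (1 / 2 : ℝ) * L := hS
  have hstep : (m : ℝ) / (2 * n) * Real.log ((q : ℝ) / n) - (n : ℝ)⁻¹ * ((1 / 2 : ℝ) * L)
      ≤ (m : ℝ) / (2 * n) * Real.log ((q : ℝ) / n) - (n : ℝ)⁻¹ * S := by
    have := mul_le_mul_of_nonneg_left hS2 hninv.le
    linarith
  refine le_trans ?_ hstep
  -- final arithmetic
  have hmain : (m : ℝ) / (2 * n) * Real.log ((q : ℝ) / n) - (n : ℝ)⁻¹ * ((1 / 2 : ℝ) * L)
      = ((m : ℝ) * Real.log ((q : ℝ) / n) - L) / (2 * n) := by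
    field_simp
  rw [hmain]
  have h1 : (m : ℝ) * ((m : ℝ) - 1) / 2 / q ≤ (m : ℝ) * Real.log ((q : ℝ) / n) - L := hsum2
  rw [div_le_div_iff₀ (by positivity) (by positivity)]
  have hm1 : (1:ℝ) ≤ (m:ℝ) := by
    exact_mod_cast (by omega : 1 ≤ m)
  have h2 : ((m:ℝ) * ((m:ℝ) - 1) / 2 / q) * (4 * n * q) = 2 * n * ((m:ℝ) * ((m:ℝ) - 1)) := by
    field_simp
    ring
  have h3 := mul_le_mul_of_nonneg_right h1 (le_of_lt (by positivity : (0:ℝ) < 4 * n * q))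
  rw [h2] at h3
  have h4 : ((m:ℝ) - 1) ^ 2 ≤ (m:ℝ) * ((m:ℝ) - 1) := by nlinarith
  have h5 : ((m:ℝ) - 1) ^ 2 * (2 * n) ≤ 2 * n * ((m:ℝ) * ((m:ℝ) - 1)) := by nlinarith
  linarith
end
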